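/- arXiv:1103.5170 — 6 statements merged into one kernel-verified Lean document; each statement's English description precedes it below -/
import Mathlib

section
/- Let f(D) be a real-valued function on datasets with sensitivity σ(f) = max over neighboring D₁,D₂ of |f(D₁)−f(D₂)|. Then the mechanism L(D) = f(D) + X, where X ~ Lap(σ(f)/ε), is ε-differentially private. -/
open MeasureTheory

/-- Two datasets (multisets of tuples) are neighboring if they differ in the
presence of exactly one tuple. -/
def Neighboring {T : Type*} (D₁ D₂ : Multiset T) : Prop :=
  ∃ t : T, D₁ = t ::ₘ D₂ ∨ D₂ = t ::ₘ D₁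

/-- Density of the Laplace distribution with scale `b`. -/
noncomputable def laplacePDF (b x : ℝ) : ℝ := (1 / (2 * b)) * Real.exp (-|x| / b)

/-- The Laplace mechanism for `f`: output `f(D) + X` with `X ~ Lap(b)`,
i.e. the output distribution has density `laplacePDF b (x - f D)`. -/
noncomputable def laplaceMechanism {T : Type*} (f : Multiset T → ℝ) (b : ℝ)
    (D : Multiset T) : Measure ℝ :=
  (volume : Measure ℝ).withDensity (fun x => ENNReal.ofReal (laplacePDF b (x - f D)))

/-- If `f` has sensitivity `σf` (the maximum change of `f` between neighboring
datasets), then the mechanism `L(D) = f(D) + X` with `X ~ Lap(σf/ε)` is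
`ε`-differentially private. -/
theorem laplace_mechanism_diffPrivate {T : Type*} (f : Multiset T → ℝ)
    (ε σf : ℝ) (hε : 0 < ε) (hσ : 0 < σf)
    (hsens : ∀ D₁ D₂ : Multiset T, Neighboring D₁ D₂ → |f D₁ - f D₂| ≤ σf) :
    ∀ D₁ D₂ : Multiset T, Neighboring D₁ D₂ → ∀ S : Set ℝ, MeasurableSet S →
      laplaceMechanism f (σf / ε) D₁ S ≤
        ENNReal.ofReal (Real.exp ε) * laplaceMechanism f (σf / ε) D₂ S := by
  intro D₁ D₂ hN S hS
  have hb : 0 < σf / ε := div_pos hσ hε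
  have key : ∀ x : ℝ, ENNReal.ofReal (laplacePDF (σf / ε) (x - f D₁)) ≤
      ENNReal.ofReal (Real.exp ε) * ENNReal.ofReal (laplacePDF (σf / ε) (x - f D₂)) := by
    intro x
    rw [← ENNReal.ofReal_mul (Real.exp_pos ε).le]
    apply ENNReal.ofReal_le_ofReal
    unfold laplacePDF
    rw [show Real.exp ε * (1 / (2 * (σf / ε)) * Real.exp (-|x - f D₂| / (σf / ε))) =
        1 / (2 * (σf / ε)) * (Real.exp ε * Real.exp (-|x - f D₂| / (σf / ε))) by ring]
    apply mul_le_mul_of_nonneg_left _ (by positivity)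
    rw [← Real.exp_add]
    apply Real.exp_le_exp.mpr
    have h1 : |x - f D₂| - |x - f D₁| ≤ σf := by
      calc |x - f D₂| - |x - f D₁| ≤ |(x - f D₂) - (x - f D₁)| := abs_sub_abs_le_abs_sub _ _
        _ = |f D₁ - f D₂| := by ring_nf
        _ ≤ σf := hsens D₁ D₂ hN
    have hεb : ε * (σf / ε) = σf := by field_simp
    have h2 : (|x - f D₂| - |x - f D₁|) / (σf / ε) ≤ ε := by
      rw [div_le_iff₀ hb]; linarith
    rw [sub_div] at h2
    rw [neg_div, neg_div]
    linarith
  unfold laplaceMechanism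
  rw [withDensity_apply _ hS, withDensity_apply _ hS, ← lintegral_const_mul' _ _ ENNReal.ofReal_ne_top]
  exact lintegral_mono fun x => key x
end

section
/- Fix h ≥ 0 and ε > 0. Among all positive sequences (ε_0,…,ε_h) with Σ_{i=0}^h ε_i = ε, the sum Σ_{i=0}^h 2^{h−i}/ε_i² is minimized by ε_i = 2^{(h−i)/3} · ε · (2^{1/3}−1)/(2^{(h+1)/3}−1), and the minimum value is (2^{(h+1)/3}−1)³ / (ε²(2^{1/3}−1)³). -/
open Finset Real

section Aux

private lemma geom_aux (a : ℝ) (ha : a ≠ 1) (h : ℕ) :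
    ∑ i : Fin (h + 1), a ^ (h - i.val) = (a ^ (h + 1) - 1) / (a - 1) := by
  rw [Fin.sum_univ_eq_sum_range (fun j => a ^ (h - j)) (h + 1), ← geom_sum_eq ha (h + 1),
    ← Finset.sum_range_reflect (fun j => a ^ j) (h + 1)]
  simp

end Aux

/-- Among all positive sequences `(ε_0, …, ε_h)` with `∑ ε_i = ε`, the sum
`∑_{i=0}^h 2^(h−i)/ε_i²` is minimized by
`ε_i = 2^((h−i)/3)·ε·(2^(1/3)−1)/(2^((h+1)/3)−1)`, with minimum value
`(2^((h+1)/3)−1)³ / (ε²·(2^(1/3)−1)³)`. -/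
theorem geometric_budget_optimal (h : ℕ) (ε : ℝ) (hε : 0 < ε) :
    (∀ e : Fin (h + 1) → ℝ, (∀ i, 0 < e i) → ∑ i, e i = ε →
      ((2 : ℝ) ^ (((h : ℝ) + 1) / 3) - 1) ^ 3 /
          (ε ^ 2 * ((2 : ℝ) ^ ((1 : ℝ) / 3) - 1) ^ 3) ≤
        ∑ i : Fin (h + 1), (2 : ℝ) ^ (h - i.val) / (e i) ^ 2) ∧
    (∑ i : Fin (h + 1),
        (2 : ℝ) ^ (((h : ℝ) - (i.val : ℝ)) / 3) * ε *
          ((2 : ℝ) ^ ((1 : ℝ) / 3) - 1) / ((2 : ℝ) ^ (((h : ℝ) + 1) / 3) - 1) = ε) ∧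
    (∑ i : Fin (h + 1), (2 : ℝ) ^ (h - i.val) /
        ((2 : ℝ) ^ (((h : ℝ) - (i.val : ℝ)) / 3) * ε *
          ((2 : ℝ) ^ ((1 : ℝ) / 3) - 1) / ((2 : ℝ) ^ (((h : ℝ) + 1) / 3) - 1)) ^ 2 =
      ((2 : ℝ) ^ (((h : ℝ) + 1) / 3) - 1) ^ 3 /
        (ε ^ 2 * ((2 : ℝ) ^ ((1 : ℝ) / 3) - 1) ^ 3)) := by
  set a : ℝ := (2 : ℝ) ^ ((1 : ℝ) / 3) with ha_def
  have ha1 : 1 < a := by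
    rw [ha_def]
    have := Real.rpow_lt_rpow_of_exponent_lt one_lt_two (show (0:ℝ) < 1/3 by norm_num)
    rwa [Real.rpow_zero] at this
  have ha0 : 0 < a := lt_trans one_pos ha1
  have ham : 0 < a - 1 := by linarith
  have ha3 : a ^ (3 : ℕ) = 2 := by
    rw [ha_def, ← Real.rpow_natCast (_ ^ _) 3, ← Real.rpow_mul (by norm_num)]
    norm_num
  have hcube : ∀ n : ℕ, (a ^ n) ^ (3 : ℕ) = (2 : ℝ) ^ n := by
    intro n
    rw [← pow_mul, mul_comm, pow_mul, ha3]
  have hexp : ∀ i : Fin (h + 1),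
      (2 : ℝ) ^ (((h : ℝ) - (i.val : ℝ)) / 3) = a ^ (h - i.val) := by
    intro i
    have hi : (i.val : ℝ) ≤ (h : ℝ) := by
      exact_mod_cast Nat.lt_succ_iff.mp i.isLt
    have : (h : ℝ) - (i.val : ℝ) = ((h - i.val : ℕ) : ℝ) := by
      rw [Nat.cast_sub (Nat.lt_succ_iff.mp i.isLt)]
    rw [this, ha_def, ← Real.rpow_natCast (_ ^ _) (h - i.val),
      ← Real.rpow_mul (by norm_num)]
    ring_nf
  have hexp' : (2 : ℝ) ^ (((h : ℝ) + 1) / 3) = a ^ (h + 1) := by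
    have : ((h : ℝ) + 1) = ((h + 1 : ℕ) : ℝ) := by push_cast; ring
    rw [this, ha_def, ← Real.rpow_natCast (_ ^ _) (h + 1),
      ← Real.rpow_mul (by norm_num)]
    ring_nf
  have hD : 0 < a ^ (h + 1) - 1 := by
    have : 1 < a ^ (h + 1) := one_lt_pow₀ ha1 (Nat.succ_ne_zero h)
    linarith
  have hS := geom_aux a (ne_of_gt ha1) h
  set S : ℝ := ∑ i : Fin (h + 1), a ^ (h - i.val) with hS_def
  have hSpos : 0 < S := Finset.sum_pos (fun i _ => pow_pos ha0 _) Finset.univ_nonempty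
  refine ⟨?_, ?_, ?_⟩
  · -- optimality
    intro e he hsum
    set T : ℝ := ∑ i : Fin (h + 1), (2 : ℝ) ^ (h - i.val) / (e i) ^ 2 with hT_def
    have hTnn : 0 ≤ T :=
      Finset.sum_nonneg fun i _ => div_nonneg (by positivity) (by positivity)
    -- Hölder / weighted power mean
    have hHolder := Real.inner_le_weight_mul_Lp_of_nonneg Finset.univ
      (p := 3) (by norm_num) e (fun i => a ^ (h - i.val) / e i)
      (fun i => (he i).le) (fun i => div_nonneg (pow_pos ha0 _).le (he i).le)
    have hL : ∑ i : Fin (h + 1), e i * (a ^ (h - i.val) / e i) = S := by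
      apply Finset.sum_congr rfl
      intro i _
      rw [mul_comm, div_mul_cancel₀ _ (ne_of_gt (he i))]
    have hR : ∑ i : Fin (h + 1), e i * (a ^ (h - i.val) / e i) ^ (3 : ℝ) = T := by
      apply Finset.sum_congr rfl
      intro i _
      rw [show (3 : ℝ) = ((3 : ℕ) : ℝ) by norm_num,
        Real.rpow_natCast, div_pow, hcube]
      have hne := (he i).ne'
      field_simp
    rw [hL, hR, hsum] at hHolder
    -- hHolder : S ≤ ε ^ (1 - 3⁻¹) * T ^ (3 : ℝ)⁻¹
    have hcubed : S ^ (3 : ℕ) ≤ ε ^ 2 * T := by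
      have h1 : S ^ (3 : ℕ) ≤ (ε ^ (1 - (3 : ℝ)⁻¹) * T ^ (3 : ℝ)⁻¹) ^ (3 : ℕ) :=
        pow_le_pow_left₀ hSpos.le hHolder 3
      calc S ^ (3 : ℕ) ≤ (ε ^ (1 - (3 : ℝ)⁻¹) * T ^ (3 : ℝ)⁻¹) ^ (3 : ℕ) := h1
        _ = ε ^ 2 * T := by
          rw [mul_pow, ← Real.rpow_natCast (ε ^ _) 3, ← Real.rpow_natCast (T ^ _) 3,
            ← Real.rpow_mul hε.le, ← Real.rpow_mul hTnn]
          norm_num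
    have hgoal : ((2 : ℝ) ^ (((h : ℝ) + 1) / 3) - 1) ^ 3 /
        (ε ^ 2 * ((2 : ℝ) ^ ((1 : ℝ) / 3) - 1) ^ 3) = S ^ 3 / ε ^ 2 := by
      rw [hexp', ← ha_def, hS]
      field_simp
    rw [hgoal, div_le_iff₀ (by positivity)]
    calc S ^ 3 ≤ ε ^ 2 * T := hcubed
      _ = T * ε ^ 2 := mul_comm _ _
  · -- the candidate sums to ε
    have : ∀ i : Fin (h + 1),
        (2 : ℝ) ^ (((h : ℝ) - (i.val : ℝ)) / 3) * ε *
          ((2 : ℝ) ^ ((1 : ℝ) / 3) - 1) / ((2 : ℝ) ^ (((h : ℝ) + 1) / 3) - 1) =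
        a ^ (h - i.val) * (ε * (a - 1) / (a ^ (h + 1) - 1)) := by
      intro i
      rw [hexp i, hexp', ← ha_def]
      ring
    rw [Finset.sum_congr rfl (fun i _ => this i), ← Finset.sum_mul, ← hS_def, hS]
    field_simp
  · -- the value at the candidate
    have : ∀ i : Fin (h + 1),
        (2 : ℝ) ^ (h - i.val) /
          ((2 : ℝ) ^ (((h : ℝ) - (i.val : ℝ)) / 3) * ε *
            ((2 : ℝ) ^ ((1 : ℝ) / 3) - 1) / ((2 : ℝ) ^ (((h : ℝ) + 1) / 3) - 1)) ^ 2 =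
        a ^ (h - i.val) * ((a ^ (h + 1) - 1) ^ 2 / (ε ^ 2 * (a - 1) ^ 2)) := by
      intro i
      rw [hexp i, hexp', ← ha_def, ← hcube (h - i.val)]
      have h1 : (0 : ℝ) < a ^ (h - i.val) := pow_pos ha0 _
      field_simp
    rw [Finset.sum_congr rfl (fun i _ => this i), ← Finset.sum_mul, ← hS_def, hS, hexp']
    field_simp
end

section
/- Consider a root node a with f children, where the root's noisy count Y_a has Laplace noise with parameter ε₁ and each child's noisy count has independent Laplace noise with parameter ε₀. The linear estimator β_a = (f·ε₁²/(f·ε₁²+ε₀²))·Y_a + (ε₀²/(f·ε₁²+ε₀²))·(sum of children's noisy counts) is unbiased for the root's true count and has variance 2f/(f·ε₁²+ε₀²), which is strictly less than Var(Y_a) = 2/ε₁² and is minimal among all convex combinations λY_a + (1−λ)(sum of children). -/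
open MeasureTheory ProbabilityTheory

lemma my_variance_const_add {Ω : Type*} [MeasureSpace Ω]
    [IsProbabilityMeasure (volume : Measure Ω)] (c : ℝ) (Z : Ω → ℝ)
    (hZ : MemLp Z 2 volume) :
    variance (fun ω => c + Z ω) volume = variance Z volume := by
  have h1 : MemLp (fun ω => c + Z ω) 2 volume := (memLp_const c).add hZ
  rw [variance_eq_integral h1.aemeasurable, variance_eq_integral hZ.aemeasurable]
  have hint : (∫ ω, (c + Z ω)) = c + ∫ ω, Z ω := by
    rw [integral_add (integrable_const c) (hZ.integrable one_le_two), integral_const]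
    simp
  congr 1
  funext ω
  simp only [Pi.pow_apply, Pi.sub_apply, hint]
  ring

/-- For a root node `a` with `f` children, whose noisy counts are
`Y_a = C_a + X_a` (Laplace parameter `ε₁`, variance `2/ε₁²`) and
`Y_u = C_u + X_u` (Laplace parameter `ε₀`, variance `2/ε₀²`), with independent
mean-zero noise and consistent true counts (`C_a = ∑ u, C_u`), the estimator
`β_a = (f ε₁²/(f ε₁²+ε₀²))·Y_a + (ε₀²/(f ε₁²+ε₀²))·∑ u, Y_u`
is unbiased for `C_a`, has variance `2f/(f ε₁²+ε₀²)`, which is strictly less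
than `Var Y_a = 2/ε₁²`, and is minimal among all estimators
`λ·Y_a + (1−λ)·∑ u, Y_u`. -/
theorem root_child_estimator
    {Ω : Type*} [MeasureSpace Ω] [IsProbabilityMeasure (volume : Measure Ω)]
    (f : ℕ) (hf : 0 < f) (ε₀ ε₁ : ℝ) (h₀ : 0 < ε₀) (h₁ : 0 < ε₁)
    (C : Fin f → ℝ) (Ca : ℝ) (hC : Ca = ∑ u, C u)
    (X : Fin (f + 1) → Ω → ℝ)
    (hindep : iIndepFun X volume)
    (hmem : ∀ i, MemLp (X i) 2 volume)
    (hmean : ∀ i, ∫ ω, X i ω = 0)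
    (hvar₁ : variance (X 0) volume = 2 / ε₁ ^ 2)
    (hvar₀ : ∀ u : Fin f, variance (X u.succ) volume = 2 / ε₀ ^ 2)
    (Ya : Ω → ℝ) (hYa : Ya = fun ω => Ca + X 0 ω)
    (Yu : Fin f → Ω → ℝ) (hYu : Yu = fun u ω => C u + X u.succ ω)
    (βa : Ω → ℝ)
    (hβa : βa = fun ω =>
      ((f : ℝ) * ε₁ ^ 2 / ((f : ℝ) * ε₁ ^ 2 + ε₀ ^ 2)) * Ya ω +
      (ε₀ ^ 2 / ((f : ℝ) * ε₁ ^ 2 + ε₀ ^ 2)) * ∑ u, Yu u ω) :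
    (∫ ω, βa ω = Ca) ∧
    variance βa volume = 2 * (f : ℝ) / ((f : ℝ) * ε₁ ^ 2 + ε₀ ^ 2) ∧
    variance βa volume < 2 / ε₁ ^ 2 ∧
    (∀ lam : ℝ, variance βa volume ≤
      variance (fun ω => lam * Ya ω + (1 - lam) * ∑ u, Yu u ω) volume) := by
  set D : ℝ := (f : ℝ) * ε₁ ^ 2 + ε₀ ^ 2 with hD
  have hfpos : (0:ℝ) < (f : ℝ) := by exact_mod_cast hf
  have hDpos : 0 < D := by positivity
  have hε₁2 : (0:ℝ) < ε₁ ^ 2 := by positivity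
  have hε₀2 : (0:ℝ) < ε₀ ^ 2 := by positivity
  -- the estimator as constant plus a linear combination of the noises
  have h_eq : ∀ lam : ℝ,
      (fun ω => lam * Ya ω + (1 - lam) * ∑ u, Yu u ω)
        = fun ω => Ca + ∑ i : Fin (f+1), (Fin.cons lam (fun _ => 1 - lam) : Fin (f+1) → ℝ) i * X i ω := by
    intro lam
    funext ω
    simp only [hYa, hYu, hC, Fin.sum_univ_succ, Fin.cons_zero, Fin.cons_succ]
    rw [Finset.mul_sum,
      Finset.sum_congr rfl (fun i _ => mul_add (1 - lam) (C i) (X i.succ ω)),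
      Finset.sum_add_distrib, ← Finset.mul_sum]
    ring
  -- variance formula for the general convex combination
  have key : ∀ lam : ℝ,
      variance (fun ω => lam * Ya ω + (1 - lam) * ∑ u, Yu u ω) volume
        = lam ^ 2 * (2 / ε₁ ^ 2) + (f : ℝ) * ((1 - lam) ^ 2 * (2 / ε₀ ^ 2)) := by
    intro lam
    set c : Fin (f+1) → ℝ := Fin.cons lam (fun _ => 1 - lam) with hc
    have hmem' : ∀ i : Fin (f+1), MemLp (fun ω => c i * X i ω) 2 volume :=
      fun i => (hmem i).const_mul (c i)
    have hZ : MemLp (fun ω => ∑ i : Fin (f+1), c i * X i ω) 2 volume := by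
      have heq : (fun ω => ∑ i : Fin (f+1), c i * X i ω)
          = ∑ i : Fin (f+1), (fun ω => c i * X i ω) := by
        funext ω; simp
      rw [heq]
      exact memLp_finset_sum' (μ := (volume : Measure Ω)) (Finset.univ : Finset (Fin (f+1)))
        (f := fun i => fun ω => c i * X i ω) (fun i _ => hmem' i)
    rw [h_eq lam, my_variance_const_add _ _ hZ]
    have hsum : variance (fun ω => ∑ i : Fin (f+1), c i * X i ω) volume
        = ∑ i : Fin (f+1), variance (fun ω => c i * X i ω) volume := by
      have h := IndepFun.variance_sum (μ := (volume : Measure Ω))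
        (X := fun i => fun ω => c i * X i ω) (s := Finset.univ)
        (fun i _ => hmem' i)
        (fun i _ j _ hij => (hindep.indepFun hij).comp
          (measurable_const_mul (c i)) (measurable_const_mul (c j)))
      calc variance (fun ω => ∑ i : Fin (f+1), c i * X i ω) volume
          = variance (∑ i : Fin (f+1), fun ω => c i * X i ω) volume := by
            congr 1; funext ω; simp [Finset.sum_apply]
        _ = _ := h
    rw [hsum]
    have hvm : ∀ i : Fin (f+1), variance (fun ω => c i * X i ω) volume
        = c i ^ 2 * variance (X i) volume := fun i => variance_const_mul (c i) (X i) _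
    simp only [hvm]
    rw [Fin.sum_univ_succ]
    simp only [hc, Fin.cons_zero, Fin.cons_succ, hvar₁, hvar₀, Finset.sum_const,
      Finset.card_univ, Fintype.card_fin, nsmul_eq_mul]
  -- βa is the convex combination with lam = f ε₁² / D
  have hlam : βa = fun ω => ((f : ℝ) * ε₁ ^ 2 / D) * Ya ω
      + (1 - (f : ℝ) * ε₁ ^ 2 / D) * ∑ u, Yu u ω := by
    rw [hβa]
    funext ω
    have : 1 - (f : ℝ) * ε₁ ^ 2 / D = ε₀ ^ 2 / D := by
      rw [hD]; field_simp; ring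
    rw [this]
  have hvarβ : variance βa volume = 2 * (f : ℝ) / D := by
    rw [hlam, key]
    have h1 : 1 - (f : ℝ) * ε₁ ^ 2 / D = ε₀ ^ 2 / D := by rw [hD]; field_simp; ring
    rw [h1, hD]
    field_simp
  refine ⟨?_, hvarβ, ?_, ?_⟩
  · -- unbiasedness
    have hβeq : βa = fun ω => Ca + ∑ i : Fin (f+1),
        (Fin.cons ((f : ℝ) * ε₁ ^ 2 / D) (fun _ => 1 - (f : ℝ) * ε₁ ^ 2 / D) : Fin (f+1) → ℝ) i * X i ω := by
      rw [hlam, h_eq]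
    rw [hβeq]
    have hint : ∀ i : Fin (f+1), Integrable (fun ω =>
        (Fin.cons ((f : ℝ) * ε₁ ^ 2 / D) (fun _ => 1 - (f : ℝ) * ε₁ ^ 2 / D) : Fin (f+1) → ℝ) i * X i ω) volume :=
      fun i => (((hmem i).integrable one_le_two).const_mul _)
    rw [integral_add (integrable_const Ca) (integrable_finset_sum _ (fun i _ => hint i)),
      integral_const, integral_finset_sum _ (fun i _ => hint i)]
    simp [integral_const_mul, hmean]
  · -- strictly better than the root alone
    rw [hvarβ, div_lt_div_iff₀ hDpos hε₁2]
    simp only [hD]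
    nlinarith [hε₀2, mul_pos hfpos hε₁2]
  · -- minimality
    intro lam
    rw [hvarβ, key]
    have hrhs : lam ^ 2 * (2 / ε₁ ^ 2) + (f : ℝ) * ((1 - lam) ^ 2 * (2 / ε₀ ^ 2))
        = (lam ^ 2 * 2 * ε₀ ^ 2 + (f : ℝ) * (1 - lam) ^ 2 * 2 * ε₁ ^ 2) / (ε₁ ^ 2 * ε₀ ^ 2) := by
      field_simp
    rw [hrhs, div_le_div_iff₀ hDpos (by positivity)]
    simp only [hD]
    nlinarith [sq_nonneg (lam * ((f : ℝ) * ε₁ ^ 2 + ε₀ ^ 2) - (f : ℝ) * ε₁ ^ 2)]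
end

section
/- Let T be a complete tree with fanout f and height h, with nodes v assigned noisy counts Y_v = C_v + X_v where C_v is the true count (consistent: C_v = Σ_{children u} C_u) and X_v are independent with Var(X_v) = 2/ε_{h(v)}², ε depending only on the level. Then the ordinary least squares estimator β (the consistent vector minimizing Σ_v ε_{h(v)}²(Y_v−β_v)²) satisfies, for every node v: (Σ_{j=0}^{h(v)} f^j ε_j²)·β_v + f^{h(v)}·Σ_{w strict ancestor of v} ε_{h(w)}² β_w = Σ_{leaves u in subtree(v)} Σ_{w ∈ anc(u)} ε_{h(w)}² Y_w. -/
open Finset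

/-- A vector of node values on the complete tree of fanout `f` and height `h`
(nodes at height `j` are indexed by `k < f^(h-j)`; the children of node
`(j+1, k)` are `(j, k·f + r)` for `r < f`) is consistent if the value of every
internal node is the sum of the values of its children. -/
def Consistent (f h : ℕ) (b : ℕ → ℕ → ℝ) : Prop :=
  ∀ j < h, ∀ k < f ^ (h - (j + 1)),
    b (j + 1) k = ∑ r ∈ Finset.range f, b j (k * f + r)

/-- The weighted least-squares objective `∑_v ε_{h(v)}²·(Y_v − b_v)²`. -/
def lsObjective (f h : ℕ) (ε : ℕ → ℝ) (Y b : ℕ → ℕ → ℝ) : ℝ :=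
  ∑ j ∈ Finset.range (h + 1), ∑ k ∈ Finset.range (f ^ (h - j)),
    ε j ^ 2 * (Y j k - b j k) ^ 2

lemma sum_range_mul' (g : ℕ → ℝ) (a b : ℕ) :
    ∑ x ∈ Finset.range (a * b), g x
      = ∑ i ∈ Finset.range a, ∑ j ∈ Finset.range b, g (i * b + j) := by
  induction a with
  | zero => simp
  | succ a ih =>
    rw [Finset.sum_range_succ, ← ih, Nat.succ_mul, Finset.range_eq_Ico,
      ← Finset.sum_Ico_consecutive g (Nat.zero_le (a*b)) (Nat.le_add_right _ b)]
    congr 1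
    · rw [Finset.range_eq_Ico]
    rw [Finset.sum_Ico_eq_sum_range,
      Nat.add_sub_cancel_left]

lemma descend (f h : ℕ) (hf : 2 ≤ f) (β : ℕ → ℕ → ℝ) (hcons : Consistent f h β)
    (j : ℕ) : ∀ l, j ≤ l → l ≤ h → ∀ k, k < f ^ (h - l) →
    β l k = ∑ i ∈ Finset.range (f ^ (l - j)), β j (k * f ^ (l - j) + i) := by
  intro l hjl
  induction l, hjl using Nat.le_induction with
  | base => intro _ k _; simp
  | succ l hjl ih =>
    intro hlh k hk
    have hlth : l < h := by omega
    have h1 : h - (l + 1) = h - l - 1 := by omega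
    have hk' : k < f ^ (h - (l+1)) := hk
    rw [hcons l hlth k hk']
    have hch : ∀ r ∈ Finset.range f, β l (k * f + r)
        = ∑ i ∈ Finset.range (f ^ (l - j)), β j ((k * f + r) * f ^ (l - j) + i) := by
      intro r hr
      apply ih (by omega)
      have : (k * f + r) < (k + 1) * f := by
        simp at hr; nlinarith
      calc k * f + r < (k + 1) * f := this
        _ ≤ f ^ (h - (l+1)) * f := by
            exact Nat.mul_le_mul_right f hk
        _ = f ^ (h - l) := by
            rw [← pow_succ]; congr 1; omega
    rw [Finset.sum_congr rfl hch]
    have hpow : f ^ (l + 1 - j) = f * f ^ (l - j) := by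
      rw [← pow_succ']; congr 1; omega
    rw [hpow, sum_range_mul']
    apply Finset.sum_congr rfl; intro r _
    apply Finset.sum_congr rfl; intro i _
    congr 1
    ring

lemma foc (f h : ℕ) (hf : 2 ≤ f) (ε : ℕ → ℝ) (hε : ∀ j, 0 < ε j)
    (Y β : ℕ → ℕ → ℝ) (hcons : Consistent f h β)
    (hmin : ∀ b : ℕ → ℕ → ℝ, Consistent f h b →
      lsObjective f h ε Y β ≤ lsObjective f h ε Y b)
    (m : ℕ) (hm : m < f ^ h) :
    ∑ j ∈ Finset.range (h + 1), ε j ^ 2 * (Y j (m / f ^ j) - β j (m / f ^ j)) = 0 := by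
  have hf0 : 0 < f := by omega
  set S := ∑ j ∈ Finset.range (h + 1), ε j ^ 2 * (Y j (m / f ^ j) - β j (m / f ^ j)) with hS
  set B := ∑ j ∈ Finset.range (h + 1), ε j ^ 2 with hB
  have hBpos : 0 < B := by
    apply Finset.sum_pos
    · intro j _; have := hε j; positivity
    · exact Finset.nonempty_range_iff.mpr (Nat.succ_ne_zero h)
  -- the perturbed vector
  set b : ℝ → ℕ → ℕ → ℝ :=
    fun t j k => β j k + t * (if k = m / f ^ j then 1 else 0) with hb
  have hbcons : ∀ t, Consistent f h (b t) := by
    intro t j hj k hk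
    simp only [hb]
    rw [Finset.sum_add_distrib, ← hcons j hj k hk, ← Finset.mul_sum]
    congr 2
    -- indicator identity
    have key : ∀ r ∈ Finset.range f,
        (if k * f + r = m / f ^ j then (1:ℝ) else 0)
        = (if k = m / f ^ (j+1) ∧ r = (m / f ^ j) % f then (1:ℝ) else 0) := by
      intro r hr
      simp only [Finset.mem_range] at hr
      have hdd : m / f ^ (j+1) = (m / f ^ j) / f := by
        rw [pow_succ, ← Nat.div_div_eq_div_mul]
      congr 1
      apply propext
      constructor
      · intro he
        constructor
        · rw [hdd, ← he, mul_comm, Nat.mul_add_div hf0, Nat.div_eq_of_lt hr,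
            add_zero]
        · rw [← he, mul_comm, Nat.mul_add_mod, Nat.mod_eq_of_lt hr]
      · rintro ⟨h1, h2⟩
        rw [h1, hdd, h2, mul_comm, Nat.div_add_mod]
    rw [Finset.sum_congr rfl key]
    by_cases hkk : k = m / f ^ (j+1)
    · simp only [hkk, true_and, if_pos rfl]
      rw [Finset.sum_ite_eq' (Finset.range f) ((m / f ^ j) % f) (fun _ => (1:ℝ))]
      simp [Nat.mod_lt _ hf0]
    · simp [hkk]
  -- value of the objective at b t
  have hval : ∀ t : ℝ, lsObjective f h ε Y (b t)
      = lsObjective f h ε Y β - 2 * t * S + t ^ 2 * B := by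
    intro t
    have inner : ∀ j ∈ Finset.range (h+1),
        ∑ k ∈ Finset.range (f ^ (h - j)), ε j ^ 2 * (Y j k - b t j k) ^ 2
        = (∑ k ∈ Finset.range (f ^ (h - j)), ε j ^ 2 * (Y j k - β j k) ^ 2)
          + (- (2 * t * (ε j ^ 2 * (Y j (m / f ^ j) - β j (m / f ^ j))))
             + t ^ 2 * ε j ^ 2) := by
      intro j hj
      simp only [Finset.mem_range] at hj
      have hmem : m / f ^ j ∈ Finset.range (f ^ (h - j)) := by
        rw [Finset.mem_range]
        apply Nat.div_lt_of_lt_mul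
        calc m < f ^ h := hm
          _ = f ^ j * f ^ (h - j) := by rw [← pow_add]; congr 1; omega
      have step : ∀ k ∈ Finset.range (f ^ (h - j)),
          ε j ^ 2 * (Y j k - b t j k) ^ 2
          = ε j ^ 2 * (Y j k - β j k) ^ 2
            + (if k = m / f ^ j then
                (- (2 * t * (ε j ^ 2 * (Y j k - β j k))) + t ^ 2 * ε j ^ 2) else 0) := by
        intro k _
        simp only [hb]
        by_cases hkk : k = m / f ^ j
        · subst hkk; simp only [if_pos rfl, if_true, eq_self_iff_true, ite_true]; ring
        · simp only [if_neg hkk]; ring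
      rw [Finset.sum_congr rfl step, Finset.sum_add_distrib]
      congr 1
      rw [Finset.sum_ite_eq' (Finset.range (f ^ (h-j))) (m / f ^ j)
        (fun k => - (2 * t * (ε j ^ 2 * (Y j k - β j k))) + t ^ 2 * ε j ^ 2)]
      simp [hmem]
    unfold lsObjective
    rw [Finset.sum_congr rfl inner, Finset.sum_add_distrib, Finset.sum_add_distrib,
      Finset.sum_neg_distrib, ← Finset.mul_sum, ← Finset.mul_sum, ← hS, ← hB]
    ring
  -- conclude
  have hineq := hmin (b (S / B)) (hbcons (S / B))
  rw [hval (S / B)] at hineq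
  have h2 : 0 ≤ - 2 * (S / B) * S + (S / B) ^ 2 * B := by linarith
  have hSB : S / B * B = S := div_mul_cancel₀ S (ne_of_gt hBpos)
  have hsq : (S / B) ^ 2 * B = (S / B) * S := by
    rw [sq]; rw [mul_assoc, hSB]
  rw [hsq] at h2
  have h3 : 0 ≤ - (S / B * S) := by linarith
  have h4 : S / B * S = S ^ 2 / B := by field_simp
  rw [h4] at h3
  have h5 : S ^ 2 / B ≤ 0 := by linarith
  have h6 : S ^ 2 ≤ 0 := by
    by_contra hc
    push_neg at hc
    have := div_pos hc hBpos
    linarith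
  have := sq_nonneg S
  nlinarith

lemma leafsum (f h : ℕ) (hf : 2 ≤ f) (β : ℕ → ℕ → ℝ) (hcons : Consistent f h β)
    (j l k : ℕ) (hj : j ≤ l) (hl : l ≤ h) (hk : k < f ^ (h - l)) :
    ∑ u ∈ Finset.range (f ^ l), β j ((k * f ^ l + u) / f ^ j)
      = (f : ℝ) ^ j * β l k := by
  have hf0 : 0 < f := by omega
  have hpf : f ^ l = f ^ (l - j) * f ^ j := by rw [← pow_add]; congr 1; omega
  rw [hpf, sum_range_mul' (fun u => β j ((k * (f ^ (l-j) * f ^ j) + u) / f ^ j))]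
  have inner : ∀ q ∈ Finset.range (f ^ (l - j)),
      ∑ s ∈ Finset.range (f ^ j),
        β j ((k * (f ^ (l-j) * f ^ j) + (q * f ^ j + s)) / f ^ j)
      = (f : ℝ) ^ j * β j (k * f ^ (l - j) + q) := by
    intro q _
    have step : ∀ s ∈ Finset.range (f ^ j),
        β j ((k * (f ^ (l-j) * f ^ j) + (q * f ^ j + s)) / f ^ j)
        = β j (k * f ^ (l - j) + q) := by
      intro s hs
      simp only [Finset.mem_range] at hs
      congr 1
      have harg : k * (f ^ (l-j) * f ^ j) + (q * f ^ j + s)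
          = s + (k * f ^ (l - j) + q) * f ^ j := by ring
      rw [harg, Nat.add_mul_div_right _ _ (pow_pos hf0 j),
        Nat.div_eq_of_lt hs, zero_add]
    rw [Finset.sum_congr rfl step, Finset.sum_const, Finset.card_range,
      nsmul_eq_mul, Nat.cast_pow]
  rw [Finset.sum_congr rfl inner, ← Finset.mul_sum,
    ← descend f h hf β hcons j l hj hl k hk]

/-- Recurrence for the OLS estimator on a complete tree of fanout `f` and
height `h` with level-dependent noise parameters: for every node `v = (l, k)`,
`(∑_{j=0}^{h(v)} f^j ε_j²)·β_v + f^{h(v)}·∑_{w strict ancestor of v} ε_{h(w)}²·β_w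
  = ∑_{leaves u ≺ v} ∑_{w ∈ anc(u)} ε_{h(w)}²·Y_w`.
The ancestor of leaf `u` at height `j` has index `u / f^j`; the strict ancestors
of node `(l, k)` are the nodes `(j, k / f^(j-l))` for `l < j ≤ h`; the leaves of
the subtree of `(l, k)` are the leaves `k·f^l + u` for `u < f^l`. -/
theorem ols_recurrence (f h : ℕ) (hf : 2 ≤ f) (ε : ℕ → ℝ) (hε : ∀ j, 0 < ε j)
    (Y β : ℕ → ℕ → ℝ)
    (hcons : Consistent f h β)
    (hmin : ∀ b : ℕ → ℕ → ℝ, Consistent f h b →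
      lsObjective f h ε Y β ≤ lsObjective f h ε Y b)
    (l k : ℕ) (hl : l ≤ h) (hk : k < f ^ (h - l)) :
    (∑ j ∈ Finset.range (l + 1), (f : ℝ) ^ j * ε j ^ 2) * β l k +
      (f : ℝ) ^ l *
        ∑ j ∈ Finset.Icc (l + 1) h, ε j ^ 2 * β j (k / f ^ (j - l)) =
    ∑ u ∈ Finset.range (f ^ l), ∑ j ∈ Finset.range (h + 1),
      ε j ^ 2 * Y j ((k * f ^ l + u) / f ^ j) := by
  have hf0 : 0 < f := by omega
  have hfoc : ∀ u ∈ Finset.range (f ^ l),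
      ∑ j ∈ Finset.range (h + 1), ε j ^ 2 * Y j ((k * f ^ l + u) / f ^ j)
      = ∑ j ∈ Finset.range (h + 1), ε j ^ 2 * β j ((k * f ^ l + u) / f ^ j) := by
    intro u hu
    simp only [Finset.mem_range] at hu
    have hlt : k * f ^ l + u < f ^ h := by
      calc k * f ^ l + u < (k + 1) * f ^ l := by nlinarith
        _ ≤ f ^ (h - l) * f ^ l := Nat.mul_le_mul_right _ hk
        _ = f ^ h := by rw [← pow_add]; congr 1; omega
    have h0 := foc f h hf ε hε Y β hcons hmin (k * f ^ l + u) hlt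
    have h1 : ∑ j ∈ Finset.range (h + 1),
        (ε j ^ 2 * Y j ((k * f ^ l + u) / f ^ j)
          - ε j ^ 2 * β j ((k * f ^ l + u) / f ^ j)) = 0 := by
      rw [← h0]; apply Finset.sum_congr rfl; intro j _; ring
    rw [Finset.sum_sub_distrib] at h1
    linarith
  rw [Finset.sum_congr rfl hfoc, Finset.sum_comm]
  have hsplit : ∑ j ∈ Finset.range (h + 1), ∑ u ∈ Finset.range (f ^ l),
        ε j ^ 2 * β j ((k * f ^ l + u) / f ^ j)
      = (∑ j ∈ Finset.range (l + 1), ∑ u ∈ Finset.range (f ^ l),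
          ε j ^ 2 * β j ((k * f ^ l + u) / f ^ j))
        + ∑ j ∈ Finset.Icc (l + 1) h, ∑ u ∈ Finset.range (f ^ l),
            ε j ^ 2 * β j ((k * f ^ l + u) / f ^ j) := by
    conv_lhs => rw [Finset.range_eq_Ico]
    rw [← Finset.sum_Ico_consecutive _ (Nat.zero_le (l+1)) (by omega : l + 1 ≤ h + 1),
      ← Finset.range_eq_Ico, Finset.Ico_add_one_right_eq_Icc]
  rw [hsplit]
  congr 1
  · -- levels 0..l
    have each : ∀ j ∈ Finset.range (l + 1),
        ∑ u ∈ Finset.range (f ^ l), ε j ^ 2 * β j ((k * f ^ l + u) / f ^ j)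
        = (f : ℝ) ^ j * ε j ^ 2 * β l k := by
      intro j hj
      simp only [Finset.mem_range] at hj
      rw [← Finset.mul_sum, leafsum f h hf β hcons j l k (by omega) hl hk]
      ring
    rw [Finset.sum_congr rfl each, Finset.sum_mul]
  · -- strict ancestors
    have each : ∀ j ∈ Finset.Icc (l + 1) h,
        ∑ u ∈ Finset.range (f ^ l), ε j ^ 2 * β j ((k * f ^ l + u) / f ^ j)
        = (f : ℝ) ^ l * (ε j ^ 2 * β j (k / f ^ (j - l))) := by
      intro j hj
      simp only [Finset.mem_Icc] at hj
      have hdiv : ∀ u ∈ Finset.range (f ^ l),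
          (k * f ^ l + u) / f ^ j = k / f ^ (j - l) := by
        intro u hu
        simp only [Finset.mem_range] at hu
        have hj' : f ^ j = f ^ l * f ^ (j - l) := by rw [← pow_add]; congr 1; omega
        rw [hj', ← Nat.div_div_eq_div_mul]
        congr 1
        have : k * f ^ l + u = u + k * f ^ l := by ring
        rw [this, Nat.add_mul_div_right _ _ (pow_pos hf0 l),
          Nat.div_eq_of_lt hu, zero_add]
      have step : ∀ u ∈ Finset.range (f ^ l),
          ε j ^ 2 * β j ((k * f ^ l + u) / f ^ j)
          = ε j ^ 2 * β j (k / f ^ (j - l)) := by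
        intro u hu; rw [hdiv u hu]
      rw [Finset.sum_congr rfl step, Finset.sum_const, Finset.card_range,
        nsmul_eq_mul, Nat.cast_pow]
    rw [Finset.sum_congr rfl each, ← Finset.mul_sum]
end

section
/- In the setting of the tree OLS estimator with level-dependent weights ε_j, the root estimate is β_root = Z_root / E_h, where E_h = Σ_{j=0}^h f^j ε_j² and Z_root = Σ_{leaves u} Σ_{w ∈ anc(u)} ε_{h(w)}² Y_w. More generally, β_v = (Z_v − f^{h(v)} F_v)/E_{h(v)}, where Z_v = Σ_{leaves u ≺ v} Σ_{w ∈ anc(u)} ε_{h(w)}² Y_w, F_v = Σ_{w strict ancestor of v} ε_{h(w)}² β_w, and E_l = Σ_{j=0}^l f^j ε_j². -/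
open Finset

/-- `Z_v = ∑_{leaves u ≺ v} ∑_{w ∈ anc(u)} ε_{h(w)}²·Y_w` for the node `v = (l, k)`. -/
def Zval (f h : ℕ) (ε : ℕ → ℝ) (Y : ℕ → ℕ → ℝ) (l k : ℕ) : ℝ :=
  ∑ u ∈ Finset.range (f ^ l), ∑ j ∈ Finset.range (h + 1),
    ε j ^ 2 * Y j ((k * f ^ l + u) / f ^ j)

/-- `F_v = ∑_{w strict ancestor of v} ε_{h(w)}²·β_w` for the node `v = (l, k)`. -/
def Fval (f h : ℕ) (ε : ℕ → ℝ) (β : ℕ → ℕ → ℝ) (l k : ℕ) : ℝ :=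
  ∑ j ∈ Finset.Icc (l + 1) h, ε j ^ 2 * β j (k / f ^ (j - l))

/-- `E_l = ∑_{j=0}^l f^j ε_j²`. -/
def Eval (f : ℕ) (ε : ℕ → ℝ) (l : ℕ) : ℝ :=
  ∑ j ∈ Finset.range (l + 1), (f : ℝ) ^ j * ε j ^ 2


lemma quad_zero {A C : ℝ} (hA : 0 ≤ A) (h : ∀ t : ℝ, 0 ≤ A * t^2 - 2 * C * t) : C = 0 := by
  have h1 := h (C / (A + 1))
  have hA1 : (0:ℝ) < A + 1 := by linarith
  have hne : A + 1 ≠ 0 := ne_of_gt hA1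
  have h2 : A * (C / (A + 1)) ^ 2 - 2 * C * (C / (A + 1))
      = (A * C ^ 2 - 2 * C ^ 2 * (A + 1)) / (A + 1) ^ 2 := by
    field_simp
  rw [h2, le_div_iff₀ (by positivity)] at h1
  nlinarith [sq_nonneg C]

lemma sum_range_mul_split (g : ℕ → ℝ) (a b : ℕ) :
    ∑ v ∈ Finset.range (a*b), g v = ∑ r ∈ Finset.range a, ∑ u ∈ Finset.range b, g (r*b+u) := by
  induction a with
  | zero => simp
  | succ n ih =>
    rw [Nat.succ_mul, Finset.sum_range_add, ih, Finset.sum_range_succ]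

lemma div_add_lt (r b u : ℕ) (hb : 0 < b) (hu : u < b) : (r * b + u) / b = r := by
  rw [add_comm, Nat.add_mul_div_right _ _ hb, Nat.div_eq_of_lt hu, zero_add]

lemma sum_range_div (g : ℕ → ℝ) (a b : ℕ) (hb : 0 < b) :
    ∑ v ∈ Finset.range (a*b), g (v / b) = (b:ℝ) * ∑ r ∈ Finset.range a, g r := by
  rw [sum_range_mul_split, Finset.mul_sum]
  refine Finset.sum_congr rfl fun r _ => ?_
  have : ∀ u ∈ Finset.range b, g ((r*b+u)/b) = g r := fun u hu => by
    rw [div_add_lt _ _ _ hb (Finset.mem_range.mp hu)]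
  rw [Finset.sum_congr rfl this, Finset.sum_const, Finset.card_range, nsmul_eq_mul]

lemma sum_indicator_div (a k'' fn : ℕ) (hf : 0 < fn) (c : ℝ) :
    ∑ r ∈ Finset.range fn, (if a = k''*fn + r then c else 0) = if a / fn = k'' then c else 0 := by
  by_cases hd : a / fn = k''
  · rw [if_pos hd]
    rw [Finset.sum_eq_single (a % fn)]
    · rw [if_pos (by rw [← hd]; exact (Nat.div_add_mod' a fn).symm)]
    · intro r hr hne
      rw [if_neg]
      intro hc
      apply hne
      have h1 : a % fn = r := by
        rw [hc, add_comm, Nat.add_mul_mod_self_right, Nat.mod_eq_of_lt (Finset.mem_range.mp hr)]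
      exact h1.symm
    · intro hc
      exact absurd (Finset.mem_range.mpr (Nat.mod_lt _ hf)) hc
  · rw [if_neg hd]
    apply Finset.sum_eq_zero
    intro r hr
    rw [if_neg]
    intro hc
    exact hd (hc ▸ div_add_lt k'' fn r hf (Finset.mem_range.mp hr))

lemma child_mem_iff (a b k r q : ℕ) (hq : 0 < q) (hr : r < q) :
    (a * q ≤ k * q + r ∧ k * q + r < b * q) ↔ (a ≤ k ∧ k < b) := by
  have hd := div_add_lt k q r hq hr
  constructor
  · rintro ⟨h1, h2⟩
    refine ⟨?_, ?_⟩
    · have := (Nat.le_div_iff_mul_le hq).mpr h1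
      rwa [hd] at this
    · have := (Nat.div_lt_iff_lt_mul hq).mpr h2
      rwa [hd] at this
  · rintro ⟨h1, h2⟩
    refine ⟨?_, ?_⟩
    · exact (Nat.le_div_iff_mul_le hq).mp (by rw [hd]; exact h1)
    · exact (Nat.div_lt_iff_lt_mul hq).mp (by rw [hd]; exact h2)

lemma child_mem_iff2 (a b k r fn m : ℕ) (hf : 0 < fn) (hr : r < fn) :
    (a * fn^(m+1) ≤ k * fn + r ∧ k * fn + r < b * fn^(m+1)) ↔ (a * fn^m ≤ k ∧ k < b * fn^m) := by
  have e1 : a * fn^(m+1) = (a * fn^m) * fn := by ring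
  have e2 : b * fn^(m+1) = (b * fn^m) * fn := by ring
  rw [e1, e2]
  exact child_mem_iff (a*fn^m) (b*fn^m) k r fn hf hr

lemma agg (f h : ℕ) (β : ℕ → ℕ → ℝ)
    (hcons : ∀ j < h, ∀ k < f ^ (h - (j + 1)),
      β (j + 1) k = ∑ r ∈ Finset.range f, β j (k * f + r)) :
    ∀ m j k, j + m ≤ h → k < f ^ (h - (j+m)) →
      ∑ u ∈ Finset.range (f^m), β j (k * f^m + u) = β (j+m) k := by
  intro m
  induction m with
  | zero => intro j k _ _; simp
  | succ m ih =>
    intro j k hjm hk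
    have h1 : j + m < h := by omega
    have h2 : h - (j+m) = (h - (j+(m+1))) + 1 := by omega
    have hk' : ∀ r < f, k*f + r < f ^ (h - (j+m)) := by
      intro r hr
      rw [h2, pow_succ]
      have h3 : (k+1) * f ≤ f ^ (h - (j + (m+1))) * f := Nat.mul_le_mul_right f hk
      calc k*f + r < k*f + f := by omega
        _ = (k+1)*f := by ring
        _ ≤ _ := h3
    have step : β (j+(m+1)) k = ∑ r ∈ Finset.range f, β (j+m) (k*f + r) := by
      have := hcons (j+m) h1 k (by rw [show h - (j+m+1) = h - (j+(m+1)) from by omega]; exact hk)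
      rw [show j + (m+1) = (j+m)+1 from by omega, this]
    rw [step]
    have : ∀ r ∈ Finset.range f, β (j+m) (k*f+r)
        = ∑ u ∈ Finset.range (f^m), β j ((k*f+r) * f^m + u) := by
      intro r hr
      exact (ih j (k*f+r) (by omega) (hk' r (Finset.mem_range.mp hr))).symm
    rw [Finset.sum_congr rfl this, pow_succ,
      show f^m * f = f * f^m from mul_comm _ _,
      sum_range_mul_split (fun v => β j (k * (f * f^m) + v)) f (f^m)]
    refine Finset.sum_congr rfl fun r _ => Finset.sum_congr rfl fun u _ => ?_
    ring_nf

/-- The test direction concentrated below node `(l,k)`. -/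
noncomputable def dir (f l k : ℕ) : ℕ → ℕ → ℝ := fun j k' =>
  if j ≤ l then (if k' ∈ Finset.Ico (k * f^(l-j)) ((k+1) * f^(l-j)) then (f:ℝ)^j else 0)
  else (if k / f^(j-l) = k' then (f:ℝ)^l else 0)

lemma dir_consistent (f h l k : ℕ) (hf : 0 < f) :
    ∀ j < h, ∀ k'' < f ^ (h - (j + 1)),
      dir f l k (j + 1) k'' = ∑ r ∈ Finset.range f, dir f l k j (k'' * f + r) := by
  intro j _ k'' _
  rcases lt_trichotomy j l with hjl | hjl | hjl
  · -- j < l : both Ico branches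
    have hm : l - j = (l - (j+1)) + 1 := by omega
    have e : ∀ r ∈ Finset.range f, dir f l k j (k''*f + r)
        = (if k'' ∈ Finset.Ico (k * f^(l-(j+1))) ((k+1) * f^(l-(j+1))) then (f:ℝ)^j else 0) := by
      intro r hr
      have hrf := Finset.mem_range.mp hr
      unfold dir
      rw [if_pos (le_of_lt hjl)]
      by_cases hmem : k * f^(l-(j+1)) ≤ k'' ∧ k'' < (k+1) * f^(l-(j+1))
      · rw [if_pos, if_pos (Finset.mem_Ico.mpr hmem)]
        rw [Finset.mem_Ico, hm]
        exact (child_mem_iff2 k (k+1) k'' r f (l-(j+1)) hf hrf).mpr hmem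
      · rw [if_neg, if_neg (fun hc => hmem (Finset.mem_Ico.mp hc))]
        intro hc
        rw [Finset.mem_Ico, hm] at hc
        exact hmem ((child_mem_iff2 k (k+1) k'' r f (l-(j+1)) hf hrf).mp hc)
    rw [Finset.sum_congr rfl e, Finset.sum_const, Finset.card_range, nsmul_eq_mul]
    unfold dir
    rw [if_pos (by omega : j + 1 ≤ l)]
    split_ifs with hmem
    · rw [pow_succ]; ring
    · ring
  · -- j = l
    subst hjl
    have e : ∀ r ∈ Finset.range f, dir f j k j (k''*f + r)
        = (if k = k''*f + r then (f:ℝ)^j else 0) := by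
      intro r _
      unfold dir
      rw [if_pos le_rfl, Nat.sub_self, pow_zero, mul_one, mul_one]
      have hiff : (k''*f + r ∈ Finset.Ico k (k+1)) ↔ (k = k''*f + r) := by
        rw [Finset.mem_Ico]; omega
      rw [if_congr hiff rfl rfl]
    rw [Finset.sum_congr rfl e, sum_indicator_div k k'' f hf]
    unfold dir
    rw [if_neg (by omega), show j + 1 - j = 1 from by omega, pow_one]
  · -- j > l : both ancestor branches
    have e : ∀ r ∈ Finset.range f, dir f l k j (k''*f + r)
        = (if k / f^(j-l) = k''*f + r then (f:ℝ)^l else 0) := by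
      intro r _
      unfold dir
      rw [if_neg (by omega)]
    rw [Finset.sum_congr rfl e, sum_indicator_div _ k'' f hf]
    unfold dir
    rw [if_neg (by omega), show j + 1 - l = (j - l) + 1 from by omega, pow_succ,
      ← Nat.div_div_eq_div_mul]

lemma div_index (f l k u j : ℕ) (hf : 0 < f) (hj : j ≤ l) (hu : u < f^l) :
    (k * f^l + u) / f^j = k * f^(l-j) + u / f^j := by
  have e : f^l = f^(l-j) * f^j := by rw [← pow_add]; congr 1; omega
  rw [e, ← mul_assoc, add_comm, Nat.add_mul_div_right _ _ (pow_pos hf j), add_comm]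

lemma div_anc (f l k u j : ℕ) (hf : 0 < f) (hj : l ≤ j) (hu : u < f^l) :
    (k * f^l + u) / f^j = k / f^(j-l) := by
  have e : f^j = f^l * f^(j-l) := by rw [← pow_add]; congr 1; omega
  rw [e, ← Nat.div_div_eq_div_mul, div_add_lt k (f^l) u (pow_pos hf l) hu]

lemma Ico_subset_range (f h l k j : ℕ) (hf : 0 < f) (hj : j ≤ l) (hl : l ≤ h)
    (hk : k < f^(h-l)) :
    Finset.Ico (k * f^(l-j)) ((k+1) * f^(l-j)) ⊆ Finset.range (f^(h-j)) := by
  intro x hx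
  rw [Finset.mem_Ico] at hx
  rw [Finset.mem_range]
  have e : f^(h-j) = f^(h-l) * f^(l-j) := by rw [← pow_add]; congr 1; omega
  calc x < (k+1) * f^(l-j) := hx.2
    _ ≤ f^(h-l) * f^(l-j) := Nat.mul_le_mul_right _ hk
    _ = f^(h-j) := e.symm

lemma anc_mem_range (f h l k j : ℕ) (hf : 0 < f) (hj : l ≤ j) (hjh : j ≤ h)
    (hk : k < f^(h-l)) : k / f^(j-l) ∈ Finset.range (f^(h-j)) := by
  rw [Finset.mem_range, Nat.div_lt_iff_lt_mul (pow_pos hf _), ← pow_add]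
  have e : h - j + (j - l) = h - l := by omega
  rw [e]; exact hk

lemma inner_le (f h l k j : ℕ) (hf : 0 < f) (hj : j ≤ l) (hl : l ≤ h)
    (hk : k < f^(h-l)) (c : ℝ) (g : ℕ → ℝ) :
    ∑ k' ∈ Finset.range (f^(h-j)), c * g k' * dir f l k j k'
      = (f:ℝ)^j * ∑ i ∈ Finset.range (f^(l-j)), c * g (k * f^(l-j) + i) := by
  have e : ∀ k' ∈ Finset.range (f^(h-j)), c * g k' * dir f l k j k'
      = (if k' ∈ Finset.Ico (k * f^(l-j)) ((k+1) * f^(l-j)) then c * g k' * (f:ℝ)^j else 0) := by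
    intro k' _
    unfold dir
    rw [if_pos hj]
    split_ifs <;> ring
  rw [Finset.sum_congr rfl e, Finset.sum_ite_mem,
    Finset.inter_eq_right.mpr (Ico_subset_range f h l k j hf hj hl hk),
    Finset.sum_Ico_eq_sum_range]
  have e2 : (k+1) * f^(l-j) - k * f^(l-j) = f^(l-j) := by
    rw [Nat.succ_mul]; omega
  rw [e2, Finset.mul_sum]
  exact Finset.sum_congr rfl fun i _ => by ring

lemma inner_gt (f h l k j : ℕ) (hf : 0 < f) (hj : l < j) (hjh : j ≤ h)
    (hk : k < f^(h-l)) (c : ℝ) (g : ℕ → ℝ) :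
    ∑ k' ∈ Finset.range (f^(h-j)), c * g k' * dir f l k j k'
      = (f:ℝ)^l * (c * g (k / f^(j-l))) := by
  have e : ∀ k' ∈ Finset.range (f^(h-j)), c * g k' * dir f l k j k'
      = (if k / f^(j-l) = k' then c * g k' * (f:ℝ)^l else 0) := by
    intro k' _
    unfold dir
    rw [if_neg (by omega)]
    split_ifs <;> ring
  rw [Finset.sum_congr rfl e, Finset.sum_ite_eq,
    if_pos (anc_mem_range f h l k j hf (le_of_lt hj) hjh hk)]
  ring

lemma dir_Y_sum (f h l k : ℕ) (hf : 0 < f) (hl : l ≤ h) (hk : k < f^(h-l))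
    (ε : ℕ → ℝ) (Y : ℕ → ℕ → ℝ) :
    ∑ j ∈ Finset.range (h+1), ∑ k' ∈ Finset.range (f^(h-j)),
        ε j ^ 2 * Y j k' * dir f l k j k' = Zval f h ε Y l k := by
  rw [Zval, Finset.sum_comm]
  refine Finset.sum_congr rfl fun j hj => ?_
  have hjh : j ≤ h := by have := Finset.mem_range.mp hj; omega
  by_cases hjl : j ≤ l
  · rw [inner_le f h l k j hf hjl hl hk (ε j ^ 2) (Y j)]
    have e : ∀ u ∈ Finset.range (f^l), ε j ^ 2 * Y j ((k * f^l + u)/f^j)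
        = (fun v => ε j ^ 2 * Y j (k * f^(l-j) + v)) (u / f^j) := by
      intro u hu
      rw [div_index f l k u j hf hjl (Finset.mem_range.mp hu)]
    rw [Finset.sum_congr rfl e]
    have e2 : f^l = f^(l-j) * f^j := by rw [← pow_add]; congr 1; omega
    rw [e2, show ((f:ℝ)^j) = ((f^j : ℕ) : ℝ) from by push_cast; ring]
    exact (sum_range_div (fun v => ε j ^ 2 * Y j (k * f^(l-j) + v)) (f^(l-j)) (f^j)
      (pow_pos hf j)).symm
  · push_neg at hjl
    rw [inner_gt f h l k j hf hjl hjh hk (ε j ^ 2) (Y j)]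
    have e : ∀ u ∈ Finset.range (f^l), ε j ^ 2 * Y j ((k * f^l + u)/f^j)
        = ε j ^ 2 * Y j (k / f^(j-l)) := by
      intro u hu
      rw [div_anc f l k u j hf (le_of_lt hjl) (Finset.mem_range.mp hu)]
    rw [Finset.sum_congr rfl e, Finset.sum_const, Finset.card_range, nsmul_eq_mul,
      Nat.cast_pow]

lemma dir_β_sum (f h l k : ℕ) (hf : 0 < f) (hl : l ≤ h) (hk : k < f^(h-l))
    (ε : ℕ → ℝ) (β : ℕ → ℕ → ℝ) (hcons : Consistent f h β) :
    ∑ j ∈ Finset.range (h+1), ∑ k' ∈ Finset.range (f^(h-j)),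
        ε j ^ 2 * β j k' * dir f l k j k'
      = Eval f ε l * β l k + (f:ℝ)^l * Fval f h ε β l k := by
  rw [Finset.range_eq_Ico,
    ← Finset.sum_Ico_consecutive _ (Nat.zero_le (l+1)) (by omega : l+1 ≤ h+1)]
  simp only [← Finset.range_eq_Ico]
  have part1 : ∑ j ∈ Finset.range (l+1), ∑ k' ∈ Finset.range (f^(h-j)),
      ε j ^ 2 * β j k' * dir f l k j k' = Eval f ε l * β l k := by
    rw [Eval, Finset.sum_mul]
    refine Finset.sum_congr rfl fun j hj => ?_
    have hjl : j ≤ l := by have := Finset.mem_range.mp hj; omega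
    rw [inner_le f h l k j hf hjl hl hk (ε j ^ 2) (β j)]
    have e : ∑ i ∈ Finset.range (f^(l-j)), ε j ^ 2 * β j (k * f^(l-j) + i)
        = ε j ^ 2 * β l k := by
      rw [← Finset.mul_sum]
      congr 1
      have := agg f h β hcons (l-j) j k (by omega)
        (by rw [show h - (j + (l-j)) = h - l from by omega]; exact hk)
      rw [show j + (l-j) = l from by omega] at this
      exact this
    rw [e]; ring
  have part2 : ∑ j ∈ Finset.Ico (l+1) (h+1), ∑ k' ∈ Finset.range (f^(h-j)),
      ε j ^ 2 * β j k' * dir f l k j k' = (f:ℝ)^l * Fval f h ε β l k := by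
    rw [Fval, Finset.mul_sum, ← Finset.Ico_add_one_right_eq_Icc]
    refine Finset.sum_congr rfl fun j hj => ?_
    rw [Finset.mem_Ico] at hj
    rw [inner_gt f h l k j hf (by omega) (by omega) hk (ε j ^ 2) (β j)]
  rw [part1, part2]

lemma orthogonality (f h : ℕ) (ε : ℕ → ℝ) (Y β : ℕ → ℕ → ℝ)
    (hcons : Consistent f h β)
    (hmin : ∀ b : ℕ → ℕ → ℝ, Consistent f h b →
      lsObjective f h ε Y β ≤ lsObjective f h ε Y b)
    (d : ℕ → ℕ → ℝ) (hd : Consistent f h d) :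
    ∑ j ∈ Finset.range (h+1), ∑ k ∈ Finset.range (f^(h-j)),
      ε j ^ 2 * (Y j k - β j k) * d j k = 0 := by
  set A : ℝ := ∑ j ∈ Finset.range (h+1), ∑ k ∈ Finset.range (f^(h-j)),
    ε j ^ 2 * d j k ^ 2 with hA_def
  set C : ℝ := ∑ j ∈ Finset.range (h+1), ∑ k ∈ Finset.range (f^(h-j)),
    ε j ^ 2 * (Y j k - β j k) * d j k with hC_def
  have hA : 0 ≤ A := by
    apply Finset.sum_nonneg
    intro j _
    apply Finset.sum_nonneg
    intro k _
    positivity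
  have hbt : ∀ t : ℝ, Consistent f h (fun j k => β j k + t * d j k) := by
    intro t j hj k hk
    simp only
    rw [hcons j hj k hk, hd j hj k hk, Finset.mul_sum, ← Finset.sum_add_distrib]
  have key : ∀ t : ℝ, lsObjective f h ε Y (fun j k => β j k + t * d j k)
      = lsObjective f h ε Y β + (A * t^2 - 2 * C * t) := by
    intro t
    have e1 : ∀ j k, ε j ^ 2 * (Y j k - (β j k + t * d j k)) ^ 2
        = ε j ^ 2 * (Y j k - β j k) ^ 2 + (ε j ^ 2 * d j k ^ 2) * t^2
          - (ε j ^ 2 * (Y j k - β j k) * d j k) * (2 * t) := by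
      intro j k; ring
    show (∑ j ∈ Finset.range (h+1), ∑ k ∈ Finset.range (f ^ (h - j)),
        ε j ^ 2 * (Y j k - (β j k + t * d j k)) ^ 2) = _
    rw [Finset.sum_congr rfl fun j _ => Finset.sum_congr rfl fun k _ => e1 j k]
    simp only [Finset.sum_add_distrib, Finset.sum_sub_distrib, ← Finset.sum_mul]
    rw [hA_def, hC_def, lsObjective]
    ring
  apply quad_zero hA
  intro t
  have := hmin _ (hbt t)
  rw [key t] at this
  linarith


/-- Closed forms for the tree OLS estimator: the root estimate is
`β_root = Z_root / E_h`, and more generally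
`β_v = (Z_v − f^{h(v)}·F_v) / E_{h(v)}` for every node `v = (l, k)`. -/
theorem ols_closed_form (f h : ℕ) (hf : 2 ≤ f) (ε : ℕ → ℝ) (hε : ∀ j, 0 < ε j)
    (Y β : ℕ → ℕ → ℝ)
    (hcons : Consistent f h β)
    (hmin : ∀ b : ℕ → ℕ → ℝ, Consistent f h b →
      lsObjective f h ε Y β ≤ lsObjective f h ε Y b) :
    β h 0 = Zval f h ε Y h 0 / Eval f ε h ∧
    ∀ l ≤ h, ∀ k < f ^ (h - l),
      β l k = (Zval f h ε Y l k - (f : ℝ) ^ l * Fval f h ε β l k) / Eval f ε l := by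
  have hf0 : 0 < f := by omega
  have main : ∀ l ≤ h, ∀ k < f ^ (h - l),
      β l k = (Zval f h ε Y l k - (f : ℝ) ^ l * Fval f h ε β l k) / Eval f ε l := by
    intro l hl k hk
    have hE : 0 < Eval f ε l := by
      apply Finset.sum_pos
      · intro j _
        have h1 : ε j ≠ 0 := (hε j).ne'
        positivity
      · exact Finset.nonempty_range_add_one
    have horth := orthogonality f h ε Y β hcons hmin (dir f l k)
      (dir_consistent f h l k hf0)
    have hsplit : ∑ j ∈ Finset.range (h+1), ∑ k' ∈ Finset.range (f^(h-j)),
        ε j ^ 2 * (Y j k' - β j k') * dir f l k j k'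
        = (∑ j ∈ Finset.range (h+1), ∑ k' ∈ Finset.range (f^(h-j)),
            ε j ^ 2 * Y j k' * dir f l k j k')
          - (∑ j ∈ Finset.range (h+1), ∑ k' ∈ Finset.range (f^(h-j)),
            ε j ^ 2 * β j k' * dir f l k j k') := by
      rw [← Finset.sum_sub_distrib]
      refine Finset.sum_congr rfl fun j _ => ?_
      rw [← Finset.sum_sub_distrib]
      exact Finset.sum_congr rfl fun k' _ => by ring
    rw [hsplit, dir_Y_sum f h l k hf0 hl hk ε Y,
      dir_β_sum f h l k hf0 hl hk ε β hcons] at horth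
    rw [eq_div_iff hE.ne']
    linarith
  refine ⟨?_, main⟩
  have h0 : (0:ℕ) < f ^ (h - h) := pow_pos hf0 _
  have hmain := main h le_rfl 0 h0
  rw [hmain]
  have hF : Fval f h ε β h 0 = 0 := by
    rw [Fval, show Finset.Icc (h+1) h = ∅ from Finset.Icc_eq_empty (by omega)]
    simp
  rw [hF, mul_zero, sub_zero]
end

section
/- Let A be an ε-differentially private algorithm and 0 < p < 1. The algorithm that first includes each element of the input dataset independently with probability p into a sample S, and then outputs A(S), is 2p·e^ε-differentially private. -/
open MeasureTheory

/-- An algorithm `A` is `ε`-differentially private. -/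
def DiffPrivate {T Ω : Type*} [MeasurableSpace Ω]
    (ε : ℝ) (A : Multiset T → Measure Ω) : Prop :=
  ∀ D₁ D₂ : Multiset T, Neighboring D₁ D₂ → ∀ S : Set Ω, MeasurableSet S →
    A D₁ S ≤ ENNReal.ofReal (Real.exp ε) * A D₂ S

/-- The output distribution of "sample each element of `D` independently with
probability `p`, then run `A` on the sample": the mixture over all position
subsamples `S` of `D`, weighted by `p^|S|·(1-p)^(|D|-|S|)`. -/
noncomputable def sampledAlgorithm {T Ω : Type*} [MeasurableSpace Ω]
    (A : Multiset T → Measure Ω) (p : ℝ) (D : Multiset T) : Measure Ω :=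
  (D.powerset.map (fun S =>
    ENNReal.ofReal (p ^ Multiset.card S * (1 - p) ^ (Multiset.card D - Multiset.card S)) •
      A S)).sum

lemma real_ineq1 (ε p : ℝ) (hε : 0 < ε) (hp0 : 0 < p) (hp1 : p < 1) :
    1 - p + p * Real.exp ε ≤ Real.exp (2 * p * Real.exp ε) := by
  nlinarith [Real.add_one_le_exp (2 * p * Real.exp ε), Real.exp_pos ε, Real.one_le_exp hε.le]

lemma real_ineq2 (ε p : ℝ) (hε : 0 < ε) (hp0 : 0 < p) (hp1 : p < 1) :
    1 ≤ Real.exp (2 * p * Real.exp ε) * (1 - p + p * Real.exp (-ε)) := by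
  have h1 : Real.exp ε * Real.exp (-ε) = 1 := by rw [← Real.exp_add]; simp
  have hE := Real.one_le_exp hε.le
  have hF := Real.exp_pos (-ε)
  have h2 : (0:ℝ) < 1 - p + p * Real.exp (-ε) := by nlinarith
  have h3 : (1 + 2*p*Real.exp ε) * (1 - p + p * Real.exp (-ε))
      ≤ Real.exp (2*p*Real.exp ε) * (1 - p + p * Real.exp (-ε)) := by
    have := Real.add_one_le_exp (2 * p * Real.exp ε)
    nlinarith
  have h4 : 1 ≤ (1 + 2*p*Real.exp ε) * (1 - p + p * Real.exp (-ε)) := by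
    have expand : (1 + 2*p*Real.exp ε) * (1 - p + p * Real.exp (-ε))
        = 1 + p * (Real.exp (-ε) - 1 + 2*p + 2*Real.exp ε*(1-p))
          + 2*p*p*(Real.exp ε * Real.exp (-ε) - 1) := by ring
    rw [expand, h1]
    have hin : 0 ≤ Real.exp (-ε) - 1 + 2*p + 2*Real.exp ε*(1-p) := by nlinarith
    nlinarith [mul_nonneg hp0.le hin]
  linarith

lemma multiset_sum_apply' {Ω : Type*} [MeasurableSpace Ω] (l : Multiset (Measure Ω)) (s : Set Ω) :
    l.sum s = (l.map (fun μ => μ s)).sum := by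
  induction l using Multiset.induction with
  | empty => simp
  | cons a l ih => simp [Measure.add_apply, ih]

lemma sampled_apply {T Ω : Type*} [MeasurableSpace Ω]
    (A : Multiset T → Measure Ω) (p : ℝ) (D : Multiset T) (s : Set Ω) :
    sampledAlgorithm A p D s =
      (D.powerset.map (fun S =>
        ENNReal.ofReal (p ^ Multiset.card S * (1 - p) ^ (Multiset.card D - Multiset.card S))
          * A S s)).sum := by
  rw [sampledAlgorithm, multiset_sum_apply', Multiset.map_map]
  simp [Measure.smul_apply]

lemma term1 (ε p : ℝ) (hε : 0 < ε) (hp0 : 0 < p) (hp1 : p < 1) (m n : ℕ) (hmn : m ≤ n)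
    (a b : ENNReal) (hab : b ≤ ENNReal.ofReal (Real.exp ε) * a) :
    ENNReal.ofReal (p^m * (1-p)^(n+1-m)) * a + ENNReal.ofReal (p^(m+1) * (1-p)^(n-m)) * b
      ≤ ENNReal.ofReal (Real.exp (2*p*Real.exp ε))
          * (ENNReal.ofReal (p^m * (1-p)^(n-m)) * a) := by
  have h1p : (0:ℝ) ≤ 1 - p := by linarith
  have hK : (0:ℝ) ≤ p^m * (1-p)^(n-m) := by positivity
  have hexp : n + 1 - m = (n - m) + 1 := by omega
  have e1 : p^m * (1-p)^((n-m)+1) = (p^m*(1-p)^(n-m)) * (1-p) := by ring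
  have e2 : p^(m+1) * (1-p)^(n-m) = (p^m*(1-p)^(n-m)) * p := by ring
  rw [hexp, e1, e2, ENNReal.ofReal_mul hK, ENNReal.ofReal_mul hK]
  calc ENNReal.ofReal (p^m*(1-p)^(n-m)) * ENNReal.ofReal (1-p) * a
        + ENNReal.ofReal (p^m*(1-p)^(n-m)) * ENNReal.ofReal p * b
      ≤ ENNReal.ofReal (p^m*(1-p)^(n-m)) * ENNReal.ofReal (1-p) * a
        + ENNReal.ofReal (p^m*(1-p)^(n-m)) * ENNReal.ofReal p
          * (ENNReal.ofReal (Real.exp ε) * a) := by gcongr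
    _ = ENNReal.ofReal (p^m*(1-p)^(n-m)) * ENNReal.ofReal ((1-p) + p * Real.exp ε) * a := by
        rw [ENNReal.ofReal_add h1p (by positivity), ENNReal.ofReal_mul hp0.le]
        ring
    _ ≤ ENNReal.ofReal (p^m*(1-p)^(n-m)) * ENNReal.ofReal (Real.exp (2*p*Real.exp ε)) * a :=
        mul_le_mul_left (mul_le_mul_right
          (ENNReal.ofReal_le_ofReal (by linarith [real_ineq1 ε p hε hp0 hp1])) _) a
    _ = ENNReal.ofReal (Real.exp (2*p*Real.exp ε))
          * (ENNReal.ofReal (p^m * (1-p)^(n-m)) * a) := by ring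

lemma term2 (ε p : ℝ) (hε : 0 < ε) (hp0 : 0 < p) (hp1 : p < 1) (m n : ℕ) (hmn : m ≤ n)
    (a b : ENNReal) (hba : a ≤ ENNReal.ofReal (Real.exp ε) * b) :
    ENNReal.ofReal (p^m * (1-p)^(n-m)) * a
      ≤ ENNReal.ofReal (Real.exp (2*p*Real.exp ε))
          * (ENNReal.ofReal (p^m * (1-p)^(n+1-m)) * a
            + ENNReal.ofReal (p^(m+1) * (1-p)^(n-m)) * b) := by
  have h1p : (0:ℝ) ≤ 1 - p := by linarith
  have hK : (0:ℝ) ≤ p^m * (1-p)^(n-m) := by positivity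
  set K := p^m * (1-p)^(n-m) with hKdef
  have hb : ENNReal.ofReal (Real.exp (-ε)) * a ≤ b := by
    calc ENNReal.ofReal (Real.exp (-ε)) * a
        ≤ ENNReal.ofReal (Real.exp (-ε)) * (ENNReal.ofReal (Real.exp ε) * b) := by gcongr
      _ = ENNReal.ofReal (Real.exp (-ε) * Real.exp ε) * b := by
          rw [ENNReal.ofReal_mul (Real.exp_pos _).le]; ring
      _ = b := by rw [← Real.exp_add]; simp
  have hexp : n + 1 - m = (n - m) + 1 := by omega
  have e1 : p^m * (1-p)^((n-m)+1) = K * (1-p) := by rw [hKdef]; ring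
  have e2 : p^(m+1) * (1-p)^(n-m) = K * p := by rw [hKdef]; ring
  have hreal : K ≤ Real.exp (2*p*Real.exp ε) * (K*(1-p) + K*p*Real.exp (-ε)) := by
    nlinarith [mul_le_mul_of_nonneg_left (real_ineq2 ε p hε hp0 hp1) hK]
  rw [hexp, e1, e2]
  calc ENNReal.ofReal K * a
      ≤ ENNReal.ofReal (Real.exp (2*p*Real.exp ε) * (K*(1-p) + K*p*Real.exp (-ε))) * a :=
        mul_le_mul_left (ENNReal.ofReal_le_ofReal hreal) a
    _ = ENNReal.ofReal (Real.exp (2*p*Real.exp ε))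
          * (ENNReal.ofReal (K*(1-p)) * a + ENNReal.ofReal (K*p) * (ENNReal.ofReal (Real.exp (-ε)) * a)) := by
        rw [ENNReal.ofReal_mul (Real.exp_pos _).le,
          ENNReal.ofReal_add (by positivity) (by positivity),
          ENNReal.ofReal_mul (by positivity : (0:ℝ) ≤ K*p)]
        ring
    _ ≤ ENNReal.ofReal (Real.exp (2*p*Real.exp ε))
          * (ENNReal.ofReal (K*(1-p)) * a + ENNReal.ofReal (K*p) * b) := by gcongr

lemma sampled_key {T Ω : Type*} [MeasurableSpace Ω]
    (A : Multiset T → Measure Ω) (ε : ℝ) (hε : 0 < ε) (hA : DiffPrivate ε A)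
    (p : ℝ) (hp0 : 0 < p) (hp1 : p < 1) (t : T) (D : Multiset T)
    (s : Set Ω) (hs : MeasurableSet s) :
    sampledAlgorithm A p (t ::ₘ D) s
        ≤ ENNReal.ofReal (Real.exp (2*p*Real.exp ε)) * sampledAlgorithm A p D s
    ∧ sampledAlgorithm A p D s
        ≤ ENNReal.ofReal (Real.exp (2*p*Real.exp ε)) * sampledAlgorithm A p (t ::ₘ D) s := by
  have expand : sampledAlgorithm A p (t ::ₘ D) s
      = (D.powerset.map (fun S =>
          ENNReal.ofReal (p ^ Multiset.card S
              * (1-p) ^ (Multiset.card D + 1 - Multiset.card S)) * A S s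
          + ENNReal.ofReal (p ^ (Multiset.card S + 1)
              * (1-p) ^ (Multiset.card D - Multiset.card S)) * A (t ::ₘ S) s)).sum := by
    rw [sampled_apply, Multiset.powerset_cons, Multiset.map_add, Multiset.sum_add,
      Multiset.map_map, Multiset.sum_map_add]
    simp [Function.comp]
  rw [expand, sampled_apply, ← Multiset.sum_map_mul_left, ← Multiset.sum_map_mul_left]
  constructor
  · apply Multiset.sum_map_le_sum_map
    intro S hS
    have hmn : Multiset.card S ≤ Multiset.card D :=
      Multiset.card_le_card (Multiset.mem_powerset.mp hS)
    exact term1 ε p hε hp0 hp1 _ _ hmn _ _ (hA (t ::ₘ S) S ⟨t, Or.inl rfl⟩ s hs)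
  · apply Multiset.sum_map_le_sum_map
    intro S hS
    have hmn : Multiset.card S ≤ Multiset.card D :=
      Multiset.card_le_card (Multiset.mem_powerset.mp hS)
    exact term2 ε p hε hp0 hp1 _ _ hmn _ _ (hA S (t ::ₘ S) ⟨t, Or.inr rfl⟩ s hs)

/-- Privacy amplification by sampling: if `A` is `ε`-differentially private and
`0 < p < 1`, then sampling each input element independently with probability
`p` and running `A` on the sample is `2p·e^ε`-differentially private. -/
theorem sampling_amplification {T Ω : Type*} [MeasurableSpace Ω]
    (A : Multiset T → Measure Ω) (hprob : ∀ D, IsProbabilityMeasure (A D))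
    (ε : ℝ) (hε : 0 < ε) (hA : DiffPrivate ε A)
    (p : ℝ) (hp0 : 0 < p) (hp1 : p < 1) :
    DiffPrivate (2 * p * Real.exp ε) (sampledAlgorithm A p) := by
  rintro D₁ D₂ ⟨t, h | h⟩ s hs
  · subst h
    exact (sampled_key A ε hε hA p hp0 hp1 t D₂ s hs).1
  · subst h
    exact (sampled_key A ε hε hA p hp0 hp1 t D₁ s hs).2
end
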